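/- arXiv:2311.06839 — 4 statements merged into one kernel-verified Lean document; each statement's English description precedes it below -/
import Mathlib

section
/- For real λ > 1, 2·( (λ³−1)/(λ⁴−1) + (1 − (λ³−1)/(λ⁴−1))·(1/λ²) ) + ( (λ³−1)/(λ⁴−1)·λ² + (1 − (λ³−1)/(λ⁴−1))·(1/λ²) ) > 3. -/
/-- The two-value critical point inequality from the proof of the clipped gradient
alignment theorem. -/
theorem two_value_critical_point_inequality (lam : ℝ) (hlam : 1 < lam) :
    2 * ((lam ^ 3 - 1) / (lam ^ 4 - 1)
          + (1 - (lam ^ 3 - 1) / (lam ^ 4 - 1)) * (1 / lam ^ 2))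
      + ((lam ^ 3 - 1) / (lam ^ 4 - 1) * lam ^ 2
          + (1 - (lam ^ 3 - 1) / (lam ^ 4 - 1)) * (1 / lam ^ 2)) > 3 := by
  have h0 : (0:ℝ) < lam := by linarith
  have h4 : (0:ℝ) < lam ^ 4 - 1 := by nlinarith [sq_nonneg lam, sq_nonneg (lam^2-1), sq_nonneg (lam-1), mul_pos (by linarith : (0:ℝ)<lam) (by linarith : (0:ℝ)<lam)]
  have h2 : (0:ℝ) < lam ^ 2 := by positivity
  rw [gt_iff_lt, ← sub_pos]
  have key : 2 * ((lam ^ 3 - 1) / (lam ^ 4 - 1)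
          + (1 - (lam ^ 3 - 1) / (lam ^ 4 - 1)) * (1 / lam ^ 2))
      + ((lam ^ 3 - 1) / (lam ^ 4 - 1) * lam ^ 2
          + (1 - (lam ^ 3 - 1) / (lam ^ 4 - 1)) * (1 / lam ^ 2)) - 3
      = (2*(lam^3-1)*lam^2 + 3*((lam^4-1)-(lam^3-1)) + (lam^3-1)*lam^4 - 3*(lam^4-1)*lam^2)
        / ((lam^4-1)*lam^2) := by
    field_simp
    ring
  rw [key]
  apply div_pos _ (by positivity)
  have hn : 2*(lam^3-1)*lam^2 + 3*((lam^4-1)-(lam^3-1)) + (lam^3-1)*lam^4 - 3*(lam^4-1)*lam^2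
      = lam^2*(lam-1)^4*(lam+1) := by ring
  rw [hn]
  have h1 : (0:ℝ) < lam - 1 := by linarith
  positivity
end

section
/- Let W1 ∈ R^{m×d} and W2 ∈ R^{1×m} evolve under gradient flow of a differentiable loss L that depends on W1, W2 only through their product W = W2·W1 (so ∂L/∂W1 = W2ᵀ·G and ∂L/∂W2 = G·W1ᵀ where G = ∂L/∂W). If at time 0 we have W1·W1ᵀ = W2ᵀ·W2, then W1(t)·W1(t)ᵀ = W2(t)ᵀ·W2(t) for all t ≥ 0. -/
open Matrix

attribute [local instance] Matrix.normedAddCommGroup Matrix.normedSpace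

section aux

attribute [-instance] instTopologicalSpaceMatrix Matrix.instUniformSpace

variable {a b c : ℕ}

noncomputable def mulCLM (a b c : ℕ) :
    Matrix (Fin a) (Fin b) ℝ →L[ℝ] Matrix (Fin b) (Fin c) ℝ →L[ℝ] Matrix (Fin a) (Fin c) ℝ :=
  LinearMap.toContinuousLinearMap
    { toFun := fun A => LinearMap.toContinuousLinearMap
        { toFun := fun M => A * M
          map_add' := fun x y => Matrix.mul_add A x y
          map_smul' := fun r x => (Matrix.mul_smul A r x) }
      map_add' := fun x y => by ext M; simp [Matrix.add_mul]
      map_smul' := fun r x => by ext M; simp [Matrix.smul_mul] }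

@[simp] lemma mulCLM_apply (A : Matrix (Fin a) (Fin b) ℝ) (M : Matrix (Fin b) (Fin c) ℝ) :
    mulCLM a b c A M = A * M := rfl

lemma HasDerivAt.matMul {A : ℝ → Matrix (Fin a) (Fin b) ℝ} {M : ℝ → Matrix (Fin b) (Fin c) ℝ}
    {A' M'} {t : ℝ} (hA : HasDerivAt A A' t) (hM : HasDerivAt M M' t) :
    HasDerivAt (fun s => A s * M s) (A' * M t + A t * M') t := by
  have hc : HasDerivAt (fun s => mulCLM a b c (A s)) (mulCLM a b c A') t :=
    (mulCLM a b c).hasFDerivAt.comp_hasDerivAt t hA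
  simpa using hc.clm_apply hM

noncomputable def transposeCLM (a b : ℕ) :
    Matrix (Fin a) (Fin b) ℝ →L[ℝ] Matrix (Fin b) (Fin a) ℝ :=
  LinearMap.toContinuousLinearMap
    { toFun := fun A => Aᵀ
      map_add' := fun x y => Matrix.transpose_add x y
      map_smul' := fun r x => Matrix.transpose_smul r x }

lemma HasDerivAt.matTranspose {A : ℝ → Matrix (Fin a) (Fin b) ℝ} {A'} {t : ℝ}
    (hA : HasDerivAt A A' t) :
    HasDerivAt (fun s => (A s)ᵀ) A'ᵀ t :=
  (transposeCLM a b).hasFDerivAt.comp_hasDerivAt t hA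

end aux

/-- Balancedness invariant for two-layer linear networks under gradient flow:
if `W1 W1ᵀ = W2ᵀ W2` at time 0, it holds for all `t ≥ 0`. -/
theorem balancedness_invariant {m d : ℕ}
    (W1 : ℝ → Matrix (Fin m) (Fin d) ℝ)
    (W2 : ℝ → Matrix (Fin 1) (Fin m) ℝ)
    (G : ℝ → Matrix (Fin 1) (Fin d) ℝ)
    (hW1 : ∀ t : ℝ, 0 ≤ t → HasDerivAt W1 (-((W2 t)ᵀ * G t)) t)
    (hW2 : ∀ t : ℝ, 0 ≤ t → HasDerivAt W2 (-(G t * (W1 t)ᵀ)) t)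
    (h0 : W1 0 * (W1 0)ᵀ = (W2 0)ᵀ * W2 0) :
    ∀ t : ℝ, 0 ≤ t → W1 t * (W1 t)ᵀ = (W2 t)ᵀ * W2 t := by
  set f : ℝ → Matrix (Fin m) (Fin m) ℝ :=
    fun s => W1 s * (W1 s)ᵀ - (W2 s)ᵀ * W2 s with hf
  have key : ∀ s : ℝ, 0 ≤ s → HasDerivAt f 0 s := by
    intro s hs
    have h1 := (hW1 s hs).matMul (hW1 s hs).matTranspose
    have h2 := (hW2 s hs).matTranspose.matMul (hW2 s hs)
    have := h1.sub h2
    convert this using 1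
    case e'_4 => rfl
    case e'_5 => rfl
    case e'_6 => rfl
    case e'_8 => rfl
    simp [Matrix.transpose_neg, Matrix.transpose_mul, Matrix.neg_mul, Matrix.mul_neg,
      Matrix.mul_assoc]
    abel
  intro t ht
  have := constant_of_has_deriv_right_zero (f := f) (a := 0) (b := t)
    (fun x hx => ((key x hx.1).continuousAt.continuousWithinAt))
    (fun x hx => (key x hx.1).hasDerivWithinAt)
  have hft := this t ⟨le_refl 0 |>.trans ht, le_refl t⟩
  have : f t = f 0 := by simpa using hft
  have h0' : f 0 = 0 := by simp [hf, h0]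
  have : f t = 0 := this.trans h0'
  have := sub_eq_zero.mp this
  exact this
end

section
/- Compute d/dt of W1·W1ᵀ − W2ᵀ·W2 under gradient flow: with dW1/dt = −W2ᵀG Xᵀ and dW2/dt = −G Xᵀ W1ᵀ (for any matrices G ∈ R^{1×n}, X ∈ R^{d×n}), the derivative d/dt(W1 W1ᵀ) equals d/dt(W2ᵀ W2); explicitly both equal −W1 X Gᵀ W2 − W2ᵀ G Xᵀ W1ᵀ. -/
open Matrix

attribute [local instance] Matrix.normedAddCommGroup Matrix.normedSpace

private lemma mul_isBoundedBilinear {a b c : ℕ} :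
    IsBoundedBilinearMap ℝ (fun p : Matrix (Fin a) (Fin b) ℝ × Matrix (Fin b) (Fin c) ℝ =>
      p.1 * p.2) where
  add_left x₁ x₂ y := Matrix.add_mul x₁ x₂ y
  smul_left c x y := Matrix.smul_mul c x y
  add_right x y₁ y₂ := Matrix.mul_add x y₁ y₂
  smul_right c x y := Matrix.mul_smul x c y
  bound := by
    refine ⟨b + 1, by positivity, fun x y => ?_⟩
    rw [show ((b : ℝ) + 1) * ‖x‖ * ‖y‖ = (b + 1) * (‖x‖ * ‖y‖) by ring]
    refine (Matrix.norm_le_iff (by positivity)).2 fun i j => ?_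
    calc ‖(x * y) i j‖ = ‖∑ k, x i k * y k j‖ := by rw [Matrix.mul_apply]
      _ ≤ ∑ k, ‖x i k * y k j‖ := norm_sum_le _ _
      _ ≤ ∑ _k : Fin b, ‖x‖ * ‖y‖ := by
          refine Finset.sum_le_sum fun k _ => ?_
          rw [norm_mul]
          exact mul_le_mul (Matrix.norm_entry_le_entrywise_sup_norm x)
            (Matrix.norm_entry_le_entrywise_sup_norm y) (norm_nonneg _) (norm_nonneg _)
      _ = b * (‖x‖ * ‖y‖) := by simp [mul_comm]
      _ ≤ (b + 1) * (‖x‖ * ‖y‖) := by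
          have : (0:ℝ) ≤ ‖x‖ * ‖y‖ := by positivity
          nlinarith

private lemma HasDerivAt.matmul {a b c : ℕ} {t : ℝ}
    {A : ℝ → Matrix (Fin a) (Fin b) ℝ} {B : ℝ → Matrix (Fin b) (Fin c) ℝ}
    {A' : Matrix (Fin a) (Fin b) ℝ} {B' : Matrix (Fin b) (Fin c) ℝ}
    (hA : HasDerivAt A A' t) (hB : HasDerivAt B B' t) :
    HasDerivAt (fun s => A s * B s) (A' * B t + A t * B') t := by
  have h := (mul_isBoundedBilinear.hasFDerivAt (A t, B t)).comp_hasDerivAt t (hA.prodMk hB)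
  simp [IsBoundedBilinearMap.deriv_apply, add_comm] at h
  exact h

private lemma HasDerivAt.mtranspose {a b : ℕ} {t : ℝ}
    {A : ℝ → Matrix (Fin a) (Fin b) ℝ} {A' : Matrix (Fin a) (Fin b) ℝ}
    (hA : HasDerivAt A A' t) :
    HasDerivAt (fun s => (A s)ᵀ) A'ᵀ t := by
  let f : Matrix (Fin a) (Fin b) ℝ →ₗ[ℝ] Matrix (Fin b) (Fin a) ℝ :=
    { toFun := Matrix.transpose, map_add' := fun _ _ => Matrix.transpose_add _ _,
      map_smul' := fun _ _ => Matrix.transpose_smul _ _ }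
  have := (f.toContinuousLinearMap.hasFDerivAt (x := A t)).comp_hasDerivAt t hA
  exact this

/-- Derivative computation for the balancedness invariant: under the gradient-flow
dynamics `dW1/dt = −W2ᵀ G Xᵀ`, `dW2/dt = −G Xᵀ W1ᵀ`, the derivatives of `W1 W1ᵀ`
and `W2ᵀ W2` coincide and both equal `−W1 X Gᵀ W2 − W2ᵀ G Xᵀ W1ᵀ`. -/
theorem balancedness_derivative {m d n : ℕ}
    (W1 : ℝ → Matrix (Fin m) (Fin d) ℝ)
    (W2 : ℝ → Matrix (Fin 1) (Fin m) ℝ)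
    (G : Matrix (Fin 1) (Fin n) ℝ) (X : Matrix (Fin d) (Fin n) ℝ)
    (t : ℝ)
    (hW1 : HasDerivAt W1 (-((W2 t)ᵀ * G * Xᵀ)) t)
    (hW2 : HasDerivAt W2 (-(G * Xᵀ * (W1 t)ᵀ)) t) :
    HasDerivAt (fun s => W1 s * (W1 s)ᵀ)
        (-(W1 t * X * Gᵀ * W2 t) - (W2 t)ᵀ * G * Xᵀ * (W1 t)ᵀ) t ∧
    HasDerivAt (fun s => (W2 s)ᵀ * W2 s)
        (-(W1 t * X * Gᵀ * W2 t) - (W2 t)ᵀ * G * Xᵀ * (W1 t)ᵀ) t := by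
  constructor
  · have h := hW1.matmul hW1.mtranspose
    convert h using 1
    simp [Matrix.transpose_mul, Matrix.mul_assoc]
    abel
  · have h := hW2.mtranspose.matmul hW2
    convert h using 1
    simp [Matrix.transpose_mul, Matrix.mul_assoc]
    abel
end

section
/- Consider a two-layer linear model f(x) = W2·W1·x with W2 ∈ R^{1×m}, W1 = (W_s, W_n) ∈ R^{m×(d_s+d_n)}, trained by gradient flow on the population squared loss over data with x_s ~ N(y v, σ²I), x_n ~ N(0, σ²I), y ∈ {−1,1} uniform, v ≠ 0. If at initialization W2ᵀW2 = W1W1ᵀ and the flow converges to a global minimum of the loss, then at the limit W_n = 0. -/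
open Matrix Finset

attribute [local instance] Matrix.normedAddCommGroup Matrix.normedSpace

/-- Second-moment matrix `E[x xᵀ] = blockdiag(v vᵀ + σ² I, σ² I)` of the
signal-plus-noise model. -/
noncomputable def sigMat {ds dn : ℕ} (v : Fin ds → ℝ) (σ : ℝ) :
    Matrix (Fin ds ⊕ Fin dn) (Fin ds ⊕ Fin dn) ℝ :=
  Matrix.fromBlocks (vecMulVec v v + σ ^ 2 • 1) 0 0 (σ ^ 2 • 1)

/-- First-moment row vector `E[y xᵀ] = (vᵀ, 0)`. -/
noncomputable def muRow {ds dn : ℕ} (v : Fin ds → ℝ) :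
    Matrix (Fin 1) (Fin ds ⊕ Fin dn) ℝ :=
  Matrix.replicateRow (Fin 1) (Sum.elim v 0)

/-- Population squared loss `E[(1/2)(W2 W1 x − y)²]` of the two-layer linear model,
written in closed form via the moments of the signal-plus-noise distribution. -/
noncomputable def popLoss {m ds dn : ℕ} (v : Fin ds → ℝ) (σ : ℝ)
    (W1 : Matrix (Fin m) (Fin ds ⊕ Fin dn) ℝ) (W2 : Matrix (Fin 1) (Fin m) ℝ) : ℝ :=
  (1 / 2) * ((W2 * W1 * sigMat (dn := dn) v σ * (W2 * W1)ᵀ) 0 0)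
    - ((W2 * W1 * (muRow (dn := dn) v)ᵀ) 0 0) + 1 / 2

/-! ### Auxiliary lemmas -/

/-- Evaluation of a matrix entry, as a continuous linear map. -/
noncomputable def entryCLM (ι κ : Type*) [Fintype ι] [Fintype κ] (i : ι) (j : κ) :
    Matrix ι κ ℝ →L[ℝ] ℝ :=
  LinearMap.toContinuousLinearMap
    { toFun := fun A => A i j
      map_add' := fun _ _ => rfl
      map_smul' := fun _ _ => rfl }

lemma hasDerivAt_entry {ι κ : Type*} [Fintype ι] [Fintype κ]
    {f : ℝ → Matrix ι κ ℝ} {f' : Matrix ι κ ℝ} {t : ℝ}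
    (h : HasDerivAt f f' t) (i : ι) (j : κ) :
    HasDerivAt (fun s => f s i j) (f' i j) t :=
  (entryCLM ι κ i j).hasFDerivAt.comp_hasDerivAt t h

lemma tendsto_entry {ι κ : Type*} [Fintype ι] [Fintype κ]
    {f : ℝ → Matrix ι κ ℝ} {L : Matrix ι κ ℝ}
    (h : Filter.Tendsto f Filter.atTop (nhds L)) (i : ι) (j : κ) :
    Filter.Tendsto (fun s => f s i j) Filter.atTop (nhds (L i j)) :=
  ((entryCLM ι κ i j).continuous.tendsto L).comp h

/-- A balanced rank-one factorization: if the Gram matrix of the rows of `R`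
equals `c cᵀ`, then each row of `R` is proportional to `∑ j, c j • R j`. -/
lemma key_factor {ι κ : Type*} [Fintype ι] [Fintype κ]
    (c : ι → ℝ) (R : ι → κ → ℝ)
    (hbal : ∀ i j, c i * c j = ∑ k, R i k * R j k) (i : ι) (k : κ) :
    (∑ j, c j * c j) * R i k = c i * ∑ j, c j * R j k := by
  set S := ∑ j, c j * c j with hS
  set q : κ → ℝ := fun k => ∑ j, c j * R j k with hq
  have h1 : ∑ l, R i l * R i l = c i * c i := (hbal i i).symm
  have h2 : ∑ l, R i l * q l = c i * S := by
    calc ∑ l, R i l * q l = ∑ l, ∑ j, c j * (R i l * R j l) := by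
          simp only [hq, Finset.mul_sum]; exact Finset.sum_congr rfl fun l _ =>
            Finset.sum_congr rfl fun j _ => by ring
      _ = ∑ j, c j * (c i * c j) := by
          rw [Finset.sum_comm]
          exact Finset.sum_congr rfl fun j _ => by rw [← Finset.mul_sum, ← hbal]
      _ = c i * S := by rw [hS, Finset.mul_sum]; exact Finset.sum_congr rfl fun j _ => by ring
  have h3 : ∑ l, q l * q l = S * S := by
    calc ∑ l, q l * q l = ∑ l, ∑ a, ∑ b, (c a * c b) * (R a l * R b l) := by
          refine Finset.sum_congr rfl fun l _ => ?_
          simp only [hq, Finset.sum_mul_sum]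
          exact Finset.sum_congr rfl fun a _ => Finset.sum_congr rfl fun b _ => by ring
      _ = ∑ a, ∑ b, (c a * c b) * (c a * c b) := by
          rw [Finset.sum_comm]
          refine Finset.sum_congr rfl fun a _ => ?_
          rw [Finset.sum_comm]
          refine Finset.sum_congr rfl fun b _ => ?_
          rw [← Finset.mul_sum, ← hbal]
      _ = S * S := by
          rw [hS, Finset.sum_mul_sum]
          exact Finset.sum_congr rfl fun a _ => Finset.sum_congr rfl fun b _ => by ring
  have hz : ∑ l, (S * R i l - c i * q l) ^ 2 = 0 := by
    have : ∑ l, (S * R i l - c i * q l) ^ 2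
        = S * S * (∑ l, R i l * R i l) - 2 * S * c i * (∑ l, R i l * q l)
          + c i * c i * (∑ l, q l * q l) := by
      simp only [Finset.mul_sum, ← Finset.sum_sub_distrib, ← Finset.sum_add_distrib]
      exact Finset.sum_congr rfl fun l _ => by ring
    rw [this, h1, h2, h3]; ring
  have hterm := (Finset.sum_eq_zero_iff_of_nonneg (fun l _ => sq_nonneg _)).mp hz k
    (Finset.mem_univ k)
  have := pow_eq_zero_iff (n := 2) (by norm_num) |>.mp hterm
  linarith [this]

lemma sigMat_apply {ds dn : ℕ} (v : Fin ds → ℝ) (σ : ℝ)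
    (k l : Fin ds ⊕ Fin dn) :
    sigMat (dn := dn) v σ k l
      = Sum.elim v 0 k * Sum.elim v 0 l + σ ^ 2 * (if k = l then 1 else 0) := by
  cases k <;> cases l <;>
    simp [sigMat, Matrix.vecMulVec_apply, Matrix.one_apply, Matrix.smul_apply,
      smul_eq_mul, mul_ite, mul_one, mul_zero]

/-- The population loss depends on the weights only through the end-to-end map
`Q = W2 W1`, and has the scalar closed form `½(⟨q,u⟩² + σ²‖q‖²) − ⟨q,u⟩ + ½`. -/
lemma popLoss_eq {m ds dn : ℕ} (v : Fin ds → ℝ) (σ : ℝ)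
    (W1 : Matrix (Fin m) (Fin ds ⊕ Fin dn) ℝ) (W2 : Matrix (Fin 1) (Fin m) ℝ) :
    popLoss v σ W1 W2
      = (1/2) * ((∑ k, (W2 * W1) 0 k * Sum.elim v 0 k) ^ 2
          + σ ^ 2 * ∑ k, (W2 * W1) 0 k * (W2 * W1) 0 k)
        - (∑ k, (W2 * W1) 0 k * Sum.elim v 0 k) + 1/2 := by
  set Q := W2 * W1 with hQ
  set u : Fin ds ⊕ Fin dn → ℝ := Sum.elim v 0 with hu
  have hmu : (Q * (muRow (dn := dn) v)ᵀ) 0 0 = ∑ k, Q 0 k * u k := by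
    simp [Matrix.mul_apply, muRow, Matrix.transpose_apply, Matrix.replicateRow_apply, hu]
  have hsig : (Q * sigMat (dn := dn) v σ * Qᵀ) 0 0
      = (∑ k, Q 0 k * u k) ^ 2 + σ ^ 2 * ∑ k, Q 0 k * Q 0 k := by
    have hrow : ∀ l, (Q * sigMat (dn := dn) v σ) 0 l
        = (∑ k, Q 0 k * u k) * u l + σ ^ 2 * Q 0 l := by
      intro l
      rw [Matrix.mul_apply]
      calc ∑ k, Q 0 k * sigMat (dn := dn) v σ k l
          = ∑ k, (Q 0 k * u k * u l + σ ^ 2 * (Q 0 k * (if k = l then 1 else 0))) := by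
            refine Finset.sum_congr rfl fun k _ => ?_
            rw [sigMat_apply]; ring
        _ = (∑ k, Q 0 k * u k) * u l + σ ^ 2 * Q 0 l := by
            rw [Finset.sum_add_distrib, Finset.sum_mul, ← Finset.mul_sum]
            simp [mul_ite, mul_one, mul_zero]
    rw [Matrix.mul_apply]
    calc ∑ l, (Q * sigMat (dn := dn) v σ) 0 l * Qᵀ l 0
        = ∑ l, ((∑ k, Q 0 k * u k) * (u l * Q 0 l) + σ ^ 2 * (Q 0 l * Q 0 l)) := by
          refine Finset.sum_congr rfl fun l _ => ?_
          rw [hrow, Matrix.transpose_apply]; ring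
      _ = _ := by
          rw [Finset.sum_add_distrib, ← Finset.mul_sum, ← Finset.mul_sum, sq]
          have h : ∑ l, u l * Q 0 l = ∑ l, Q 0 l * u l :=
            Finset.sum_congr rfl fun l _ => mul_comm _ _
          rw [h]; ring
  unfold popLoss
  rw [← hQ, hmu, hsig]

/-- Balancedness is conserved by the gradient flow and passes to the limit. -/
lemma balanced_limit {m ds dn : ℕ} (v : Fin ds → ℝ) (σ : ℝ)
    (W1 : ℝ → Matrix (Fin m) (Fin ds ⊕ Fin dn) ℝ)
    (W2 : ℝ → Matrix (Fin 1) (Fin m) ℝ)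
    (hflow1 : ∀ t : ℝ, 0 ≤ t → HasDerivAt W1
      (-((W2 t)ᵀ * (W2 t * W1 t * sigMat (dn := dn) v σ - muRow (dn := dn) v))) t)
    (hflow2 : ∀ t : ℝ, 0 ≤ t → HasDerivAt W2
      (-((W2 t * W1 t * sigMat (dn := dn) v σ - muRow (dn := dn) v) * (W1 t)ᵀ)) t)
    (hbal0 : (W2 0)ᵀ * W2 0 = W1 0 * (W1 0)ᵀ)
    (W1lim : Matrix (Fin m) (Fin ds ⊕ Fin dn) ℝ)
    (W2lim : Matrix (Fin 1) (Fin m) ℝ)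
    (hlim1 : Filter.Tendsto W1 Filter.atTop (nhds W1lim))
    (hlim2 : Filter.Tendsto W2 Filter.atTop (nhds W2lim)) :
    ∀ i j : Fin m, W2lim 0 i * W2lim 0 j = ∑ k, W1lim i k * W1lim j k := by
  intro i j
  set g : ℝ → ℝ := fun t => W2 t 0 i * W2 t 0 j - ∑ k, W1 t i k * W1 t j k with hg
  -- the derivative of g vanishes on [0, ∞)
  have hderiv : ∀ t : ℝ, 0 ≤ t → HasDerivAt g 0 t := by
    intro t ht
    set E : Matrix (Fin 1) (Fin ds ⊕ Fin dn) ℝ :=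
      W2 t * W1 t * sigMat (dn := dn) v σ - muRow (dn := dn) v with hE
    set dW1 : Matrix (Fin m) (Fin ds ⊕ Fin dn) ℝ := -((W2 t)ᵀ * E) with hdW1
    set dW2 : Matrix (Fin 1) (Fin m) ℝ := -(E * (W1 t)ᵀ) with hdW2
    have h1 : ∀ a b, HasDerivAt (fun s => W1 s a b) (dW1 a b) t :=
      fun a b => hasDerivAt_entry (hflow1 t ht) a b
    have h2 : ∀ b, HasDerivAt (fun s => W2 s 0 b) (dW2 0 b) t :=
      fun b => hasDerivAt_entry (hflow2 t ht) 0 b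
    have hD : HasDerivAt g
        (dW2 0 i * W2 t 0 j + W2 t 0 i * dW2 0 j
          - ∑ k, (dW1 i k * W1 t j k + W1 t i k * dW1 j k)) t :=
      ((h2 i).mul (h2 j)).sub
        (HasDerivAt.fun_sum fun k _ => (h1 i k).mul (h1 j k))
    have e1 : ∀ a b, dW1 a b = -(W2 t 0 a * E 0 b) := by
      intro a b
      simp [hdW1, Matrix.neg_apply, Matrix.mul_apply, Matrix.transpose_apply,
        Fin.sum_univ_one]
    have e2 : ∀ b, dW2 0 b = -∑ l, E 0 l * W1 t b l := by
      intro b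
      simp [hdW2, Matrix.neg_apply, Matrix.mul_apply, Matrix.transpose_apply]
    have hsum : ∑ k, (dW1 i k * W1 t j k + W1 t i k * dW1 j k)
        = -(W2 t 0 i * ∑ l, E 0 l * W1 t j l)
          + -(W2 t 0 j * ∑ l, E 0 l * W1 t i l) := by
      rw [Finset.sum_add_distrib]
      congr 1
      · rw [Finset.mul_sum, ← Finset.sum_neg_distrib]
        exact Finset.sum_congr rfl fun k _ => by rw [e1]; ring
      · rw [Finset.mul_sum, ← Finset.sum_neg_distrib]
        exact Finset.sum_congr rfl fun k _ => by rw [e1]; ring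
    have hval : (dW2 0 i * W2 t 0 j + W2 t 0 i * dW2 0 j
          - ∑ k, (dW1 i k * W1 t j k + W1 t i k * dW1 j k)) = 0 := by
      rw [hsum, e2 i, e2 j]; ring
    rwa [hval] at hD
  -- hence g is constant on [0, ∞)
  have hconst : ∀ t : ℝ, 0 ≤ t → g t = g 0 := by
    intro t ht
    have := constant_of_has_deriv_right_zero (f := g) (a := 0) (b := t)
      (fun x hx => ((hderiv x hx.1).continuousAt).continuousWithinAt)
      (fun x hx => (hderiv x hx.1).hasDerivWithinAt)
    exact this t ⟨ht, le_refl t⟩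
  have hg0 : g 0 = 0 := by
    have := congrFun (congrFun hbal0 i) j
    simp only [Matrix.mul_apply, Matrix.transpose_apply, Fin.sum_univ_one] at this
    simp only [hg, this, sub_self]
  -- pass to the limit
  have htend : Filter.Tendsto g Filter.atTop
      (nhds (W2lim 0 i * W2lim 0 j - ∑ k, W1lim i k * W1lim j k)) :=
    ((tendsto_entry hlim2 0 i).mul (tendsto_entry hlim2 0 j)).sub
      (tendsto_finset_sum _ fun k _ => (tendsto_entry hlim1 i k).mul (tendsto_entry hlim1 j k))
  have htend0 : Filter.Tendsto g Filter.atTop (nhds 0) := by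
    refine Filter.Tendsto.congr' ?_ tendsto_const_nhds
    filter_upwards [Filter.eventually_ge_atTop (0:ℝ)] with t ht
    rw [hconst t ht, hg0]
  have := tendsto_nhds_unique htend htend0
  linarith [this]

set_option maxHeartbeats 2000000 in
/-- If a balanced two-layer linear network trained by gradient flow on the population
squared loss of the signal-plus-noise model converges to a global minimum, then the
noise-block weights `W_n` vanish at the limit. -/
theorem pruning_noise_weights_vanish {m ds dn : ℕ}
    (v : Fin ds → ℝ) (hv : v ≠ 0) (σ : ℝ) (hσ : 0 < σ)
    (W1 : ℝ → Matrix (Fin m) (Fin ds ⊕ Fin dn) ℝ)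
    (W2 : ℝ → Matrix (Fin 1) (Fin m) ℝ)
    (hflow1 : ∀ t : ℝ, 0 ≤ t → HasDerivAt W1
      (-((W2 t)ᵀ * (W2 t * W1 t * sigMat (dn := dn) v σ - muRow (dn := dn) v))) t)
    (hflow2 : ∀ t : ℝ, 0 ≤ t → HasDerivAt W2
      (-((W2 t * W1 t * sigMat (dn := dn) v σ - muRow (dn := dn) v) * (W1 t)ᵀ)) t)
    (hbal0 : (W2 0)ᵀ * W2 0 = W1 0 * (W1 0)ᵀ)
    (W1lim : Matrix (Fin m) (Fin ds ⊕ Fin dn) ℝ)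
    (W2lim : Matrix (Fin 1) (Fin m) ℝ)
    (hlim1 : Filter.Tendsto W1 Filter.atTop (nhds W1lim))
    (hlim2 : Filter.Tendsto W2 Filter.atTop (nhds W2lim))
    (hglobal : ∀ (A : Matrix (Fin m) (Fin ds ⊕ Fin dn) ℝ)
        (B : Matrix (Fin 1) (Fin m) ℝ),
      popLoss v σ W1lim W2lim ≤ popLoss v σ A B) :
    ∀ (i : Fin m) (j : Fin dn), W1lim i (Sum.inr j) = 0 := by
  intro i j
  set u : Fin ds ⊕ Fin dn → ℝ := Sum.elim v 0 with hu
  set h : ℝ := ∑ l, u l * u l with hh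
  set c0 : ℝ := h + σ ^ 2 with hc0
  clear_value u
  have hhnn : 0 ≤ h := by
    rw [hh]; exact Finset.sum_nonneg fun l _ => mul_self_nonneg _
  have hc0pos : 0 < c0 := by rw [hc0]; positivity
  clear_value h c0
  have hc0ne : c0 ≠ 0 := ne_of_gt hc0pos
  set Q := W2lim * W1lim with hQ
  clear_value Q
  -- a competitor realizing the optimal end-to-end map (uses row `i` of `W1`)
  set B : Matrix (Fin 1) (Fin m) ℝ := Matrix.of fun _ k => if k = i then (1:ℝ) else 0 with hB
  set A : Matrix (Fin m) (Fin ds ⊕ Fin dn) ℝ :=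
    Matrix.of fun k' l => if k' = i then u l / c0 else 0 with hA
  clear_value A B
  have hBA : ∀ l, (B * A) 0 l = u l / c0 := by
    intro l
    rw [Matrix.mul_apply]
    simp [hB, hA, ite_mul, one_mul, zero_mul, Finset.sum_ite_eq']
  -- scalar quantities at the limit and at the competitor
  set aL : ℝ := ∑ k, Q 0 k * u k with haL
  set bL : ℝ := ∑ k, Q 0 k * Q 0 k with hbL
  clear_value aL bL
  have hastar : ∑ k, (B * A) 0 k * u k = h / c0 := by
    simp only [hBA]
    rw [hh, Finset.sum_div]
    exact Finset.sum_congr rfl fun k _ => by ring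
  have hbstar : ∑ k, (B * A) 0 k * (B * A) 0 k = h / c0 ^ 2 := by
    simp only [hBA]
    rw [hh, Finset.sum_div]
    exact Finset.sum_congr rfl fun k _ => by rw [div_mul_div_comm, pow_two]
  have hkey := hglobal A B
  rw [popLoss_eq, popLoss_eq, ← hu, hastar, hbstar, ← hQ, ← haL, ← hbL] at hkey
  -- the difference of losses is a sum of squares
  have hdsum_eq : ∑ k, (Q 0 k - u k / c0) ^ 2
      = bL - 2 / c0 * aL + 1 / c0 ^ 2 * h := by
    calc ∑ k, (Q 0 k - u k / c0) ^ 2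
        = ∑ k, (Q 0 k * Q 0 k - 2 / c0 * (Q 0 k * u k) + 1 / c0 ^ 2 * (u k * u k)) := by
          exact Finset.sum_congr rfl fun k _ => by ring
      _ = bL - 2 / c0 * aL + 1 / c0 ^ 2 * h := by
          rw [Finset.sum_add_distrib, Finset.sum_sub_distrib, ← Finset.mul_sum,
            ← Finset.mul_sum, ← haL, ← hbL, ← hh]
  have hident : (1/2) * (aL ^ 2 + σ ^ 2 * bL) - aL + 1/2
        - ((1/2) * ((h / c0) ^ 2 + σ ^ 2 * (h / c0 ^ 2)) - h / c0 + 1/2)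
      = (1/2) * (aL - h / c0) ^ 2
        + (σ ^ 2 / 2) * (bL - 2 / c0 * aL + 1 / c0 ^ 2 * h) := by
    rw [hc0]
    have hne : h + σ ^ 2 ≠ 0 := by rw [← hc0]; exact hc0ne
    field_simp
    ring
  have hineq : (1/2) * (aL - h / c0) ^ 2
      + (σ ^ 2 / 2) * (∑ k, (Q 0 k - u k / c0) ^ 2) ≤ 0 := by
    rw [hdsum_eq]; linarith [hkey, hident]
  have hdnn : 0 ≤ ∑ k, (Q 0 k - u k / c0) ^ 2 :=
    Finset.sum_nonneg fun k _ => sq_nonneg _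
  have hσ2 : 0 < σ ^ 2 / 2 := by positivity
  have hdzero : ∑ k, (Q 0 k - u k / c0) ^ 2 = 0 := by
    nlinarith [sq_nonneg (aL - h / c0)]
  have hQk : ∀ k, Q 0 k = u k / c0 := by
    intro k
    have := (Finset.sum_eq_zero_iff_of_nonneg (fun l _ => sq_nonneg _)).mp hdzero k
      (Finset.mem_univ k)
    have := pow_eq_zero_iff (n := 2) (by norm_num) |>.mp this
    linarith [this]
  -- balancedness at the limit
  have hbal : ∀ a b : Fin m, W2lim 0 a * W2lim 0 b = ∑ k, W1lim a k * W1lim b k :=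
    balanced_limit v σ W1 W2 hflow1 hflow2 hbal0 W1lim W2lim hlim1 hlim2
  have hfac := key_factor (fun a => W2lim 0 a) (fun a k => W1lim a k) hbal i (Sum.inr j)
  have hcol : ∀ k, ∑ a, W2lim 0 a * W1lim a k = Q 0 k := by
    intro k; rw [hQ, Matrix.mul_apply]
  -- the end-to-end map vanishes on the noise block and is nonzero on the signal block
  have hQinr : Q 0 (Sum.inr j) = 0 := by
    rw [hQk]; simp [hu]
  obtain ⟨k0, hk0⟩ := Function.ne_iff.mp hv
  have hQinl : Q 0 (Sum.inl k0) ≠ 0 := by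
    rw [hQk]
    simp only [hu, Sum.elim_inl]
    exact div_ne_zero hk0 hc0ne
  -- the total signal strength S is nonzero
  have hSne : (∑ a, W2lim 0 a * W2lim 0 a) ≠ 0 := by
    intro hS
    have hall : ∀ a : Fin m, W2lim 0 a = 0 := by
      intro a
      have := (Finset.sum_eq_zero_iff_of_nonneg
        (fun b _ => mul_self_nonneg (W2lim 0 b))).mp hS a (Finset.mem_univ a)
      exact mul_self_eq_zero.mp this
    have : Q 0 (Sum.inl k0) = 0 := by
      rw [← hcol]
      exact Finset.sum_eq_zero fun a _ => by rw [hall a, zero_mul]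
    exact hQinl this
  -- conclude
  have : (∑ a, W2lim 0 a * W2lim 0 a) * W1lim i (Sum.inr j) = 0 := by
    rw [hfac, hcol, hQinr, mul_zero]
  exact (mul_eq_zero.mp this).resolve_left hSne
end
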